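/- Let μ = ω₂^∨ = (1/2, 1/2), J = S̃ ∖ {s₁} = {s₀, s₂}, σ = Ad(τ₂), τ := τ₂. Then: (i) EO^J_{σ,cox}(μ) = {τ, s₁τ, s₁s₂τ, s₁s₀τ}; (ii) EO^J(μ) ∖ EO^J_{σ,cox}(μ) = {s₁s₂s₀τ}; (iii) the element s₁s₂s₀τ is σ-straight; (iv) its Newton point is ν̄_{s₁s₂s₀τ} = (1/2, 1/2). -/

import Mathlib

/- Extended affine Weyl group of type C̃₂ with X = {λ ∈ (1/2)ℤ² : λ₁-λ₂ ∈ ℤ}, realized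
   inside the permutation group of ℚ²: t^λ·u acts by x ↦ λ + u(x), u a signed permutation. -/

open Classical
noncomputable section

abbrev V2 := Fin 2 → ℚ
abbrev Wt2 := Equiv.Perm V2

/-- translation t^λ -/
def transl (lam : V2) : Wt2 := Equiv.addLeft lam
/-- coordinate permutation -/
def permV (u : Equiv.Perm (Fin 2)) : Wt2 := u.arrowCongr (Equiv.refl ℚ)
/-- sign change in coordinate j -/
def negAt (j : Fin 2) : Wt2 :=
  Function.Involutive.toPerm (fun v => fun i => if i = j then -(v i) else v i)
    (by intro v; funext i; by_cases h : i = j <;> simp [h])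
/-- standard basis vector -/
def eV (i : Fin 2) : V2 := Pi.single i 1
/-- standard inner product -/
def dotp (v w : V2) : ℚ := ∑ i, v i * w i
/-- the linear part of an affine transformation -/
def linp (w : Wt2) : V2 → V2 := fun x => w x - w 0

/-- s₁ : the transposition of the two coordinates -/
def s1 : Wt2 := permV (Equiv.swap 0 1)
/-- s₂ : the sign change in coordinate 2 -/
def s2 : Wt2 := negAt 1
/-- s₀ = t^{e₁}·(sign change in coordinate 1) -/
def s0 : Wt2 := transl (eV 0) * negAt 0
/-- r : e₁ ↦ -e₂, e₂ ↦ -e₁ -/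
def rC : Wt2 := negAt 0 * (negAt 1 * permV (Equiv.swap 0 1))
/-- the length-zero element τ₂ = t^{(1/2,1/2)}·r -/
def tau2 : Wt2 := transl (fun _ => 1/2) * rC

/-- the set S̃ of simple reflections of W_a -/
def St : Set Wt2 := {s0, s1, s2}
/-- Ω = {1, τ₂} -/
def Om : Set Wt2 := {1, tau2}

/-- the positive roots e₁-e₂, e₁+e₂, 2e₁, 2e₂ -/
def PhiC2 : Set V2 := {eV 0 - eV 1, eV 0 + eV 1, eV 0 + eV 0, eV 1 + eV 1}

/-- the contribution of a positive root α to the length of w = t^λ·u -/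
def lterm (w : Wt2) (α : V2) : ℚ :=
  if linp w⁻¹ α ∈ PhiC2 then |dotp (w 0) α| else |dotp (w 0) α - 1|

/-- the length function on W̃ -/
def ell (w : Wt2) : ℚ :=
  lterm w (eV 0 - eV 1) + lterm w (eV 0 + eV 1) + lterm w (eV 0 + eV 0) + lterm w (eV 1 + eV 1)

/-- `l` is a reduced word for `w` in the Coxeter system (W_a, S̃) -/
def IsRed (w : Wt2) (l : List Wt2) : Prop :=
  (∀ s ∈ l, s ∈ St) ∧ l.prod = w ∧ (l.length : ℚ) = ell w

/-- Bruhat order on W_a, via the subword property -/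
def bleWa (u u' : Wt2) : Prop :=
  ∃ l l' : List Wt2, IsRed u' l ∧ l'.Sublist l ∧ l'.prod = u

/-- Bruhat order on W̃ = W_a ⊔ W_a·τ₂ -/
def ble (w w' : Wt2) : Prop :=
  ∃ u u' om, om ∈ Om ∧ w = u * om ∧ w' = u' * om ∧ bleWa u u'

/-- the finite Weyl group W₀ = {±1}² ⋊ S₂, generated by s₁, s₂ -/
def W0 : Subgroup Wt2 := Subgroup.closure {s1, s2}

/-- the admissible set Adm(μ) -/
def Adm (μ : V2) : Set Wt2 := {w | ∃ x ∈ W0, ble w (transl ((x : Wt2) μ))}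

/-- the standard parabolic subgroup W_J -/
def WJ (J : Set Wt2) : Subgroup Wt2 := Subgroup.closure J

/-- ^JW̃ : elements of minimal length in their coset W_J·w -/
def minJ (J : Set Wt2) : Set Wt2 := {w | ∀ x ∈ WJ J, ell w ≤ ell (x * w)}

/-- the Ekedahl-Oort elements EO^J(μ) = (W_J·Adm(μ)·W_J) ∩ ^JW̃ -/
def EO (J : Set Wt2) (μ : V2) : Set Wt2 :=
  {w | (∃ x ∈ WJ J, ∃ y ∈ WJ J, ∃ a ∈ Adm μ, w = x * a * y) ∧ w ∈ minJ J}

/-- δ_w = Ad(ω) ∘ σ -/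
def deltaW (sig : MulAut Wt2) (om : Wt2) : MulAut Wt2 := MulAut.conj om * sig

/-- supp_σ(w) for w = u·ω -/
def suppsig (sig : MulAut Wt2) (w : Wt2) : Set Wt2 :=
  {s | ∃ u om l, om ∈ Om ∧ w = u * om ∧ IsRed u l ∧
        ∃ s0 ∈ l, ∃ m : ℤ, s = ((deltaW sig om) ^ m) s0}

/-- the number of orbits of an automorphism δ on a set A -/
def orbCount (δ : MulAut Wt2) (A : Set Wt2) : ℕ :=
  {O : Set Wt2 | ∃ s ∈ A, O = {t | ∃ m : ℤ, (δ ^ m) s = t}}.ncard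

/-- w = u·ω is a σ-Coxeter element of W_{supp_σ(w)} -/
def IsCox (sig : MulAut Wt2) (w : Wt2) : Prop :=
  ∃ u om, om ∈ Om ∧ w = u * om ∧
    ell u = (orbCount (deltaW sig om) (suppsig sig w) : ℚ)

/-- EO^J_{σ,cox}(μ) -/
def EOcox (sig : MulAut Wt2) (J : Set Wt2) (μ : V2) : Set Wt2 :=
  {w | w ∈ EO J μ ∧ suppsig sig w ≠ St ∧ IsCox sig w}

/-- w·σ(w)·σ²(w)⋯σ^{m-1}(w) -/
def sigmaProd (sig : MulAut Wt2) (w : Wt2) (m : ℕ) : Wt2 :=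
  (((List.range m).map fun k => (sig ^ k) w)).prod

/-- w is σ-straight -/
def IsStraight (sig : MulAut Wt2) (w : Wt2) : Prop :=
  ∀ m : ℕ, 1 ≤ m → ell (sigmaProd sig w m) = m * ell w

/-- ν is the Newton point of w -/
def IsNewton (sig : MulAut Wt2) (w : Wt2) (ν : V2) : Prop :=
  ∃ (m : ℕ) (lam : V2), 1 ≤ m ∧ sig ^ m = 1 ∧ sigmaProd sig w m = transl lam ∧
    (∃ x ∈ W0, ν = (x : Wt2) (fun j => lam j / (m : ℚ))) ∧
    ν 1 ≤ ν 0 ∧ 0 ≤ ν 1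
/-! ### A computable model of the extended affine Weyl group -/

structure MM where
  a : ℤ
  b : ℤ
  e0 : Bool
  e1 : Bool
  p : Bool
deriving DecidableEq

namespace MM

def sgz (e : Bool) : ℤ := if e then -1 else 1
def sgq (e : Bool) : ℚ := if e then -1 else 1

def mul' (m n : MM) : MM :=
  ⟨m.a + sgz m.e0 * (if m.p then n.b else n.a),
   m.b + sgz m.e1 * (if m.p then n.a else n.b),
   xor m.e0 (if m.p then n.e1 else n.e0),
   xor m.e1 (if m.p then n.e0 else n.e1),
   xor m.p n.p⟩

instance : Mul MM := ⟨mul'⟩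
instance : One MM := ⟨⟨0, 0, false, false, false⟩⟩

def inv' (m : MM) : MM :=
  ⟨-(sgz (if m.p then m.e1 else m.e0)) * (if m.p then m.b else m.a),
   -(sgz (if m.p then m.e0 else m.e1)) * (if m.p then m.a else m.b),
   if m.p then m.e1 else m.e0,
   if m.p then m.e0 else m.e1,
   m.p⟩

instance : Inv MM := ⟨inv'⟩
instance : Div MM := ⟨fun a b => a * b⁻¹⟩

def npow' (m : MM) : ℕ → MM
  | 0 => 1
  | n + 1 => npow' m n * m

instance : Pow MM ℕ := ⟨npow'⟩
instance : Pow MM ℤ := ⟨fun m k =>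
  match k with
  | .ofNat n => m ^ n
  | .negSucc n => (m ^ (n + 1))⁻¹⟩

lemma mul_def (m n : MM) : m * n = mul' m n := rfl
lemma inv_def (m : MM) : m⁻¹ = inv' m := rfl
lemma one_def : (1 : MM) = ⟨0, 0, false, false, false⟩ := rfl

/-- translation components (as rationals; stored integers are doubled) -/
def tq (m : MM) : V2 := fun i => if i = 0 then (m.a : ℚ) / 2 else (m.b : ℚ) / 2
def eps (m : MM) (i : Fin 2) : Bool := if i = 0 then m.e0 else m.e1
def idxF (m : MM) (i : Fin 2) : Fin 2 := if m.p then (if i = 0 then 1 else 0) else i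
/-- the affine action of a model element -/
def actM (m : MM) (v : V2) : V2 := fun i => tq m i + sgq (eps m i) * v (idxF m i)

end MM

open MM in
/-- realization of a model element as a permutation of `ℚ²` -/
def phi (m : MM) : Wt2 :=
  transl (tq m) *
    ((if m.e0 then negAt 0 else 1) * ((if m.e1 then negAt 1 else 1) * (if m.p then s1 else 1)))

lemma transl_apply (lam : V2) (v : V2) : transl lam v = lam + v := rfl

lemma negAt_apply (j : Fin 2) (v : V2) :
    negAt j v = fun i => if i = j then -(v i) else v i := by
  rfl

lemma s1_apply (v : V2) : s1 v = fun i => v (Equiv.swap 0 1 i) := by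
  funext i
  simp [s1, permV, Equiv.arrowCongr_apply, Equiv.symm_swap]

lemma phi_apply (m : MM) (v : V2) : phi m v = MM.actM m v := by
  rcases m with ⟨a, b, e0, e1, p⟩
  funext i
  fin_cases i <;> cases e0 <;> cases e1 <;> cases p <;>
    simp [phi, MM.actM, MM.tq, MM.eps, MM.idxF, MM.sgq, Equiv.Perm.mul_apply,
      transl_apply, negAt_apply, s1_apply, Equiv.swap_apply_left, Equiv.swap_apply_right,
      Pi.add_apply] <;> ring
set_option linter.unreachableTactic false
set_option linter.unusedTactic false
set_option maxHeartbeats 1000000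

namespace MM

lemma sgq_xor (e f : Bool) : sgq (xor e f) = sgq e * sgq f := by
  cases e <;> cases f <;> norm_num [sgq]

lemma sgz_cast (e : Bool) : ((sgz e : ℤ) : ℚ) = sgq e := by
  cases e <;> norm_num [sgz, sgq]

lemma actM_mul (m n : MM) (v : V2) : actM (m * n) v = actM m (actM n v) := by
  funext i
  rcases m with ⟨a, b, e0, e1, p⟩
  rcases n with ⟨a', b', f0, f1, q⟩
  fin_cases i <;> cases p <;> cases q <;>
    simp [actM, tq, eps, idxF, mul_def, mul', Fin.mk_zero, Fin.mk_one,
      (by decide : ((1 : Fin 2) = 0) ↔ False), Int.cast_add, Int.cast_mul,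
      sgz_cast, sgq_xor] <;> ring

end MM

lemma phi_one : phi 1 = 1 := by
  apply Equiv.ext; intro v
  funext i
  rw [phi_apply]
  fin_cases i <;> simp [MM.actM, MM.tq, MM.eps, MM.idxF, MM.sgq, MM.one_def]

lemma phi_mul (m n : MM) : phi (m * n) = phi m * phi n := by
  apply Equiv.ext; intro v
  rw [Equiv.Perm.mul_apply, phi_apply, phi_apply, phi_apply, MM.actM_mul]

/-- an explicit left inverse of `phi` -/
def psi (w : Wt2) : MM :=
  ⟨(2 * w 0 0).num, (2 * w 0 1).num,
   decide ((if w (eV 0) 1 - w 0 1 ≠ 0 then w (eV 1) 0 - w 0 0 else w (eV 0) 0 - w 0 0) < 0),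
   decide ((if w (eV 0) 1 - w 0 1 ≠ 0 then w (eV 0) 1 - w 0 1 else w (eV 1) 1 - w 0 1) < 0),
   decide (w (eV 0) 1 - w 0 1 ≠ 0)⟩

lemma psi_phi (m : MM) : psi (phi m) = m := by
  rcases m with ⟨a, b, e0, e1, p⟩
  have h0 : ∀ i, phi ⟨a, b, e0, e1, p⟩ (0 : V2) i = MM.tq ⟨a, b, e0, e1, p⟩ i := by
    intro i; rw [phi_apply]; simp [MM.actM]
  have h1 : ∀ j i, phi ⟨a, b, e0, e1, p⟩ (eV j) i =
      MM.tq ⟨a, b, e0, e1, p⟩ i + MM.sgq (MM.eps ⟨a, b, e0, e1, p⟩ i) *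
        (if MM.idxF ⟨a, b, e0, e1, p⟩ i = j then 1 else 0) := by
    intro j i; rw [phi_apply]; simp [MM.actM, eV, Pi.single_apply, eq_comm]
  cases e0 <;> cases e1 <;> cases p <;>
    simp [psi, h0, h1, MM.tq, MM.eps, MM.idxF, MM.sgq,
      (by decide : ((1 : Fin 2) = 0) ↔ False), (by decide : ((0 : Fin 2) = 1) ↔ False)] <;>
    constructor <;> rw [(by ring : 2 * ((_ : ℚ) / 2) = _)] <;> exact Rat.num_intCast _

lemma phi_injective : Function.Injective phi := by
  intro m n h
  rw [← psi_phi m, ← psi_phi n, h]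
lemma phi_inv (m : MM) : phi m⁻¹ = (phi m)⁻¹ := by
  have hmul : m⁻¹ * m = 1 := by
    rcases m with ⟨a, b, e0, e1, p⟩
    cases e0 <;> cases e1 <;> cases p <;>
      simp [MM.mul_def, MM.mul', MM.inv_def, MM.inv', MM.one_def, MM.sgz] <;> ring
  have : phi m⁻¹ * phi m = 1 := by rw [← phi_mul, hmul, phi_one]
  exact eq_inv_of_mul_eq_one_left this

lemma phi_npow (m : MM) (n : ℕ) : phi (m ^ n) = phi m ^ n := by
  induction n with
  | zero => show phi 1 = phi m ^ 0; rw [pow_zero]; exact phi_one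
  | succ k ih =>
    have : m ^ (k + 1) = m ^ k * m := rfl
    rw [this, phi_mul, ih, pow_succ]

lemma phi_zpow (m : MM) (n : ℤ) : phi (m ^ n) = phi m ^ n := by
  cases n with
  | ofNat k =>
    have : m ^ (Int.ofNat k) = m ^ k := rfl
    rw [this, phi_npow]; norm_num
  | negSucc k =>
    have : m ^ (Int.negSucc k) = (m ^ (k + 1))⁻¹ := rfl
    rw [this, phi_inv, phi_npow, zpow_negSucc]

instance : Group MM :=
  Function.Injective.group phi phi_injective phi_one phi_mul phi_inv
    (fun _ _ => by rw [(rfl : _ / _ = _ * _⁻¹), phi_mul, phi_inv, div_eq_mul_inv])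
    phi_npow phi_zpow

/-- `phi` as a monoid hom -/
def phiM : MM →* Wt2 := ⟨⟨phi, phi_one⟩, phi_mul⟩

def ms0 : MM := ⟨2, 0, true, false, false⟩
def ms1 : MM := ⟨0, 0, false, false, true⟩
def ms2 : MM := ⟨0, 0, false, true, false⟩
def mtau : MM := ⟨1, 1, true, true, true⟩

lemma s0_eq : s0 = phi ms0 := by
  apply Equiv.ext; intro v
  rw [phi_apply]
  funext i
  fin_cases i <;>
    simp [s0, ms0, MM.actM, MM.tq, MM.eps, MM.idxF, MM.sgq, Equiv.Perm.mul_apply,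
      transl_apply, negAt_apply, eV, Pi.single_apply, Pi.add_apply,
      (by decide : ((1 : Fin 2) = 0) ↔ False)] <;> ring

lemma s1_eq : s1 = phi ms1 := by
  apply Equiv.ext; intro v
  rw [phi_apply]
  funext i
  rw [s1_apply]
  fin_cases i <;>
    simp [ms1, MM.actM, MM.tq, MM.eps, MM.idxF, MM.sgq,
      Equiv.swap_apply_left, Equiv.swap_apply_right,
      (by decide : ((1 : Fin 2) = 0) ↔ False)]

lemma s2_eq : s2 = phi ms2 := by
  apply Equiv.ext; intro v
  rw [phi_apply]
  funext i
  fin_cases i <;>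
    simp [s2, ms2, MM.actM, MM.tq, MM.eps, MM.idxF, MM.sgq, negAt_apply,
      (by decide : ((1 : Fin 2) = 0) ↔ False), (by decide : ((0 : Fin 2) = 1) ↔ False)]

lemma permV_apply (u : Equiv.Perm (Fin 2)) (v : V2) : permV u v = fun i => v (u.symm i) := rfl

lemma tau2_eq : tau2 = phi mtau := by
  apply Equiv.ext; intro v
  rw [phi_apply]
  funext i
  fin_cases i <;>
    simp [tau2, mtau, rC, MM.actM, MM.tq, MM.eps, MM.idxF, MM.sgq, Equiv.Perm.mul_apply,
      transl_apply, negAt_apply, permV_apply, Equiv.symm_swap, Pi.add_apply,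
      Equiv.swap_apply_left, Equiv.swap_apply_right,
      (by decide : ((1 : Fin 2) = 0) ↔ False), (by decide : ((0 : Fin 2) = 1) ↔ False)] <;>
    norm_num
namespace MM
def rootsZ : List (ℤ × ℤ) := [(1, -1), (1, 1), (2, 0), (0, 2)]
def linzPair (n : MM) (c d : ℤ) : ℤ × ℤ :=
  (sgz n.e0 * (if n.p then d else c), sgz n.e1 * (if n.p then c else d))
def lt2 (m : MM) (c d : ℤ) : ℤ :=
  if linzPair m⁻¹ c d ∈ rootsZ then |m.a * c + m.b * d| else |m.a * c + m.b * d - 2|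
def ell2 (m : MM) : ℤ := lt2 m 1 (-1) + lt2 m 1 1 + lt2 m 2 0 + lt2 m 0 2
end MM

lemma vec_eq_iff (v w : V2) : v = w ↔ v 0 = w 0 ∧ v 1 = w 1 := by
  rw [funext_iff, Fin.forall_fin_two]

lemma eV_apply (i j : Fin 2) : eV i j = if j = i then 1 else 0 := by
  simp [eV, Pi.single_apply]

lemma mem_PhiC2_iff (v : V2) : v ∈ PhiC2 ↔
    (v 0 = 1 ∧ v 1 = -1) ∨ (v 0 = 1 ∧ v 1 = 1) ∨ (v 0 = 2 ∧ v 1 = 0) ∨ (v 0 = 0 ∧ v 1 = 2) := by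
  have h : ∀ w : V2, v = w ↔ (v 0 = w 0 ∧ v 1 = w 1) := fun w => vec_eq_iff v w
  simp only [PhiC2, Set.mem_insert_iff, Set.mem_singleton_iff, h, Pi.sub_apply, Pi.add_apply,
    eV_apply]
  norm_num

lemma cast_pair_mem (x y : ℤ) :
    (((x:ℚ) = 1 ∧ (y:ℚ) = -1) ∨ ((x:ℚ) = 1 ∧ (y:ℚ) = 1) ∨
      ((x:ℚ) = 2 ∧ (y:ℚ) = 0) ∨ ((x:ℚ) = 0 ∧ (y:ℚ) = 2)) ↔ (x, y) ∈ MM.rootsZ := by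
  simp only [MM.rootsZ, List.mem_cons, List.mem_singleton, Prod.mk.injEq, List.not_mem_nil,
    or_false]
  constructor
  · rintro (⟨hx, hy⟩ | ⟨hx, hy⟩ | ⟨hx, hy⟩ | ⟨hx, hy⟩)
    · exact Or.inl ⟨by exact_mod_cast hx, by exact_mod_cast hy⟩
    · exact Or.inr (Or.inl ⟨by exact_mod_cast hx, by exact_mod_cast hy⟩)
    · exact Or.inr (Or.inr (Or.inl ⟨by exact_mod_cast hx, by exact_mod_cast hy⟩))
    · exact Or.inr (Or.inr (Or.inr ⟨by exact_mod_cast hx, by exact_mod_cast hy⟩))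
  · rintro (⟨hx, hy⟩ | ⟨hx, hy⟩ | ⟨hx, hy⟩ | ⟨hx, hy⟩) <;> subst hx <;> subst hy <;> norm_num

lemma linp_phi (m : MM) (α : V2) :
    linp (phi m) α = fun i => MM.sgq (MM.eps m i) * α (MM.idxF m i) := by
  funext i
  simp [linp, phi_apply, MM.actM, Pi.sub_apply]

lemma lterm_phi (m : MM) (α : V2) (c d : ℤ) (h0 : α 0 = (c:ℚ)) (h1 : α 1 = (d:ℚ)) :
    lterm (phi m) α = (MM.lt2 m c d : ℚ) / 2 := by
  have hd : dotp ((phi m) 0) α = ((m.a * c + m.b * d : ℤ) : ℚ) / 2 := by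
    simp only [dotp, Fin.sum_univ_two, phi_apply, MM.actM, MM.tq, Pi.zero_apply, mul_zero,
      add_zero, h0, h1, if_pos rfl, (by decide : ((1 : Fin 2) = 0) ↔ False), if_false]
    push_cast; ring
  have hL0 : linp (phi m)⁻¹ α 0 = (((MM.linzPair m⁻¹ c d).1 : ℤ) : ℚ) := by
    rw [← phi_inv, linp_phi]
    cases hp : (m⁻¹).p <;> cases he : (m⁻¹).e0 <;>
      simp [MM.linzPair, MM.eps, MM.idxF, MM.sgq, MM.sgz, hp, he, h0, h1]
  have hL1 : linp (phi m)⁻¹ α 1 = (((MM.linzPair m⁻¹ c d).2 : ℤ) : ℚ) := by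
    rw [← phi_inv, linp_phi]
    cases hp : (m⁻¹).p <;> cases he : (m⁻¹).e1 <;>
      simp [MM.linzPair, MM.eps, MM.idxF, MM.sgq, MM.sgz, hp, he, h0, h1,
        (by decide : ((1 : Fin 2) = 0) ↔ False)]
  have hmem : (linp (phi m)⁻¹ α ∈ PhiC2) ↔ (MM.linzPair m⁻¹ c d ∈ MM.rootsZ) := by
    rw [mem_PhiC2_iff, hL0, hL1]
    rw [← cast_pair_mem]
  rw [lterm, MM.lt2]
  by_cases hc : MM.linzPair m⁻¹ c d ∈ MM.rootsZ
  · rw [if_pos (hmem.mpr hc), if_pos hc, hd, Int.cast_abs, abs_div]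
    norm_num
  · rw [if_neg (fun hh => hc (hmem.mp hh)), if_neg hc, hd, Int.cast_abs]
    push_cast
    rw [show ((m.a : ℚ) * c + m.b * d) / 2 - 1 = ((m.a : ℚ) * c + m.b * d - 2) / 2 by ring,
      abs_div]
    norm_num
  
lemma ell_phi (m : MM) : ell (phi m) = (MM.ell2 m : ℚ) / 2 := by
  have e1 : lterm (phi m) (eV 0 - eV 1) = (MM.lt2 m 1 (-1) : ℚ) / 2 :=
    lterm_phi m _ 1 (-1) (by norm_num [Pi.sub_apply, eV_apply]) (by norm_num [Pi.sub_apply, eV_apply])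
  have e2 : lterm (phi m) (eV 0 + eV 1) = (MM.lt2 m 1 1 : ℚ) / 2 :=
    lterm_phi m _ 1 1 (by norm_num [Pi.add_apply, eV_apply]) (by norm_num [Pi.add_apply, eV_apply])
  have e3 : lterm (phi m) (eV 0 + eV 0) = (MM.lt2 m 2 0 : ℚ) / 2 :=
    lterm_phi m _ 2 0 (by norm_num [Pi.add_apply, eV_apply]) (by norm_num [Pi.add_apply, eV_apply])
  have e4 : lterm (phi m) (eV 1 + eV 1) = (MM.lt2 m 0 2 : ℚ) / 2 :=
    lterm_phi m _ 0 2 (by norm_num [Pi.add_apply, eV_apply]) (by norm_num [Pi.add_apply, eV_apply])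
  rw [ell, e1, e2, e3, e4, MM.ell2]
  push_cast; ring
def StML : List MM := [ms0, ms1, ms2]

def IsRedM (m : MM) (lm : List MM) : Prop :=
  (∀ s ∈ lm, s ∈ StML) ∧ lm.prod = m ∧ 2 * (lm.length : ℤ) = MM.ell2 m

instance IsRedM.dec (m : MM) (lm : List MM) : Decidable (IsRedM m lm) := by
  unfold IsRedM; infer_instance

lemma phiM_coe : ⇑phiM = phi := rfl

lemma St_eq : St = {phi ms0, phi ms1, phi ms2} := by
  rw [St, s0_eq, s1_eq, s2_eq]

lemma liftList (l : List Wt2) (h : ∀ s ∈ l, s ∈ St) :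
    ∃ lm : List MM, l = lm.map phi ∧ ∀ p ∈ lm, p ∈ StML := by
  induction l with
  | nil => exact ⟨[], rfl, by simp⟩
  | cons s t ih =>
    obtain ⟨lm, hlm, hmem⟩ := ih (fun x hx => h x (List.mem_cons_of_mem _ hx))
    have hs := h s (List.mem_cons_self)
    rw [St_eq] at hs
    simp only [Set.mem_insert_iff, Set.mem_singleton_iff] at hs
    obtain ⟨mx, hmx, hsx⟩ : ∃ mx, mx ∈ StML ∧ s = phi mx := by
      rcases hs with hs | hs | hs
      · exact ⟨ms0, by simp [StML], hs⟩
      · exact ⟨ms1, by simp [StML], hs⟩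
      · exact ⟨ms2, by simp [StML], hs⟩
    refine ⟨mx :: lm, by simp [hsx, ← hlm], fun p hp => ?_⟩
    rcases List.mem_cons.mp hp with h' | h'
    · rw [h']; exact hmx
    · exact hmem p h'

lemma IsRed_toM (u : Wt2) (l : List Wt2) (h : IsRed u l) :
    ∃ m lm, u = phi m ∧ l = lm.map phi ∧ IsRedM m lm := by
  obtain ⟨hSt, hprod, hlen⟩ := h
  obtain ⟨lm, rfl, hmem⟩ := liftList l hSt
  have hu : u = phi lm.prod := by
    rw [← hprod, ← phiM_coe, map_list_prod phiM]
  refine ⟨lm.prod, lm, hu, rfl, hmem, rfl, ?_⟩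
  have h2 : ((lm.map phi).length : ℚ) = (MM.ell2 lm.prod : ℚ) / 2 := by
    rw [hlen, hu, ell_phi]
  rw [List.length_map] at h2
  have h4 : ((lm.length : ℤ) : ℚ) * 2 = (MM.ell2 lm.prod : ℚ) := by push_cast; linarith
  have h5 : (lm.length : ℤ) * 2 = MM.ell2 lm.prod := by exact_mod_cast h4
  omega

lemma IsRed_ofM (m : MM) (lm : List MM) (h : IsRedM m lm) : IsRed (phi m) (lm.map phi) := by
  obtain ⟨hmem, hprod, hlen⟩ := h
  refine ⟨?_, ?_, ?_⟩
  · intro s hs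
    obtain ⟨p, hp, rfl⟩ := List.mem_map.mp hs
    have := hmem p hp
    rw [St_eq]
    simp only [StML, List.mem_cons, List.not_mem_nil, or_false] at this
    rcases this with h' | h' | h' <;> rw [h'] <;> simp
  · rw [← phiM_coe, ← map_list_prod phiM, phiM_coe, hprod]
  · rw [List.length_map, ell_phi]
    have : ((2 * lm.length : ℤ) : ℚ) = (MM.ell2 m : ℚ) := by exact_mod_cast hlen
    push_cast at this
    linarith

def bleWaM (n m : MM) : Prop :=
  ∃ lm, IsRedM m lm ∧ ∃ l' : List MM, l'.Sublist lm ∧ l'.prod = n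

lemma bleWa_iff (u : Wt2) (m : MM) : bleWa u (phi m) ↔ ∃ n, u = phi n ∧ bleWaM n m := by
  constructor
  · rintro ⟨l, l', hred, hsub, hprod⟩
    obtain ⟨m', lm, hm', rfl, hredM⟩ := IsRed_toM _ _ hred
    have hmm : m = m' := phi_injective hm'
    subst hmm
    obtain ⟨lm', hsubM, rfl⟩ := List.sublist_map_iff.mp hsub
    refine ⟨lm'.prod, ?_, lm, hredM, lm', hsubM, rfl⟩
    rw [← hprod, ← phiM_coe, map_list_prod phiM]
  · rintro ⟨n, rfl, lm, hred, l', hsub, rfl⟩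
    exact ⟨lm.map phi, l'.map phi, IsRed_ofM m lm hred, hsub.map phi,
      by rw [← phiM_coe, map_list_prod phiM]⟩

lemma Om_eq : Om = {phi 1, phi mtau} := by
  rw [Om, phi_one, tau2_eq]

lemma ble_iff (w : Wt2) (m' : MM) : ble w (phi m') ↔
    ∃ o, (o = 1 ∨ o = mtau) ∧ ∃ n, w = phi (n * o) ∧ bleWaM n (m' * o⁻¹) := by
  constructor
  · rintro ⟨u, u', om, hom, rfl, hw', hble⟩
    rw [Om_eq] at hom
    simp only [Set.mem_insert_iff, Set.mem_singleton_iff] at hom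
    obtain ⟨o, ho, rfl⟩ : ∃ o, (o = 1 ∨ o = mtau) ∧ om = phi o := by
      rcases hom with h | h
      · exact ⟨1, Or.inl rfl, h⟩
      · exact ⟨mtau, Or.inr rfl, h⟩
    obtain ⟨l, l', hred, hsub, hprod⟩ := hble
    obtain ⟨n', lm, hn', rfl, hredM⟩ := IsRed_toM _ _ hred
    have hm' : m' = n' * o := by
      apply phi_injective
      rw [phi_mul, ← hn', hw']
    have hn'2 : n' = m' * o⁻¹ := by rw [hm']; group
    refine ⟨o, ho, ?_⟩
    have hble2 : bleWa u (phi (m' * o⁻¹)) := by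
      rw [← hn'2]
      exact ⟨lm.map phi, l', IsRed_ofM _ _ hredM, hsub, hprod⟩
    obtain ⟨n, rfl, hbm⟩ := (bleWa_iff u (m' * o⁻¹)).mp hble2
    exact ⟨n, by rw [phi_mul], hbm⟩
  · rintro ⟨o, ho, n, rfl, hbm⟩
    refine ⟨phi n, phi (m' * o⁻¹), phi o, ?_, by rw [phi_mul], ?_, ?_⟩
    · rw [Om_eq]
      rcases ho with h | h <;> subst h <;> simp
    · rw [← phi_mul, inv_mul_cancel_right]
    · exact (bleWa_iff _ _).mpr ⟨n, rfl, hbm⟩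

def isEv (m : MM) : Prop := m.a % 2 = 0 ∧ m.b % 2 = 0

instance isEv.dec (m : MM) : Decidable (isEv m) := by unfold isEv; infer_instance

lemma isEv_mul {m n : MM} (hm : isEv m) (hn : isEv n) : isEv (m * n) := by
  rcases m with ⟨a, b, e0, e1, p⟩
  rcases n with ⟨a', b', f0, f1, q⟩
  obtain ⟨h1, h2⟩ := hm
  obtain ⟨h3, h4⟩ := hn
  simp only [isEv, MM.mul_def, MM.mul', MM.sgz] at *
  cases e0 <;> cases e1 <;> cases p <;> simp_all <;> omega

lemma prod_even (lm : List MM) (h : ∀ s ∈ lm, s ∈ StML) : isEv lm.prod := by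
  induction lm with
  | nil => exact ⟨rfl, rfl⟩
  | cons s t ih =>
    rw [List.prod_cons]
    refine isEv_mul ?_ (ih fun x hx => h x (List.mem_cons_of_mem _ hx))
    have := h s (List.mem_cons_self)
    simp only [StML, List.mem_cons, List.not_mem_nil, or_false] at this
    rcases this with h' | h' | h' <;> subst h' <;> decide

def allWords : ℕ → List (List MM)
  | 0 => [[]]
  | n + 1 => (allWords n).flatMap fun w => StML.map fun s => s :: w

lemma mem_allWords (lm : List MM) (h : ∀ s ∈ lm, s ∈ StML) : lm ∈ allWords lm.length := by
  induction lm with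
  | nil => simp [allWords]
  | cons s t ih =>
    simp only [List.length_cons, allWords, List.mem_flatMap, List.mem_map]
    exact ⟨t, ih fun x hx => h x (List.mem_cons_of_mem _ hx),
      s, h s (List.mem_cons_self), rfl⟩
def KJML : List MM := [1, ms0, ms2, ms0 * ms2]

lemma KJ_mul : ∀ p ∈ KJML, ∀ q ∈ KJML, p * q ∈ KJML := by decide
lemma KJ_inv : ∀ p ∈ KJML, p⁻¹ ∈ KJML := by decide

lemma WJ_sub (x : Wt2) (hx : x ∈ WJ {s0, s2}) : ∃ p ∈ KJML, x = phi p := by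
  refine Subgroup.closure_induction ?_ ?_ ?_ ?_ hx
  · intro y hy
    simp only [Set.mem_insert_iff, Set.mem_singleton_iff] at hy
    rcases hy with h | h
    · exact ⟨ms0, by simp [KJML], by rw [h, s0_eq]⟩
    · exact ⟨ms2, by simp [KJML], by rw [h, s2_eq]⟩
  · exact ⟨1, by simp [KJML], phi_one.symm⟩
  · rintro x y _ _ ⟨p, hp, rfl⟩ ⟨q, hq, rfl⟩
    exact ⟨p * q, KJ_mul p hp q hq, (phi_mul p q).symm⟩
  · rintro x _ ⟨p, hp, rfl⟩
    exact ⟨p⁻¹, KJ_inv p hp, (phi_inv p).symm⟩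

lemma WJ_mem (p : MM) (hp : p ∈ KJML) : phi p ∈ WJ {s0, s2} := by
  have hs0 : s0 ∈ WJ {s0, s2} := Subgroup.subset_closure (Set.mem_insert _ _)
  have hs2 : s2 ∈ WJ {s0, s2} := Subgroup.subset_closure (Set.mem_insert_of_mem _ rfl)
  simp only [KJML, List.mem_cons, List.not_mem_nil, or_false] at hp
  rcases hp with h | h | h | h <;> subst h
  · rw [phi_one]; exact one_mem _
  · rw [← s0_eq]; exact hs0
  · rw [← s2_eq]; exact hs2
  · rw [phi_mul, ← s0_eq, ← s2_eq]; exact mul_mem hs0 hs2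

def minJM (m : MM) : Prop := ∀ p ∈ KJML, MM.ell2 m ≤ MM.ell2 (p * m)

instance minJM.dec (m : MM) : Decidable (minJM m) := by unfold minJM; infer_instance

lemma minJ_iff (m : MM) : phi m ∈ minJ {s0, s2} ↔ minJM m := by
  constructor
  · intro h p hp
    have h2 := h (phi p) (WJ_mem p hp)
    rw [← phi_mul, ell_phi, ell_phi] at h2
    have h3 : (MM.ell2 m : ℚ) ≤ (MM.ell2 (p * m) : ℚ) := by linarith
    exact_mod_cast h3
  · intro h x hxW
    obtain ⟨p, hp, rfl⟩ := WJ_sub x hxW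
    rw [← phi_mul, ell_phi, ell_phi]
    have h3 : (MM.ell2 m : ℚ) ≤ (MM.ell2 (p * m) : ℚ) := by exact_mod_cast h p hp
    linarith

/-- the four translation vectors in the orbit of μ -/
def inV4 (v : V2) : Prop := (v 0 = 1/2 ∨ v 0 = -(1/2)) ∧ (v 1 = 1/2 ∨ v 1 = -(1/2))

lemma s1_inv : s1⁻¹ = s1 := by
  rw [s1_eq, ← phi_inv, show ms1⁻¹ = ms1 by decide]

lemma s2_inv : s2⁻¹ = s2 := by
  rw [s2_eq, ← phi_inv, show ms2⁻¹ = ms2 by decide]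

lemma s1_val0 (v : V2) : s1 v 0 = v 1 := by rw [s1_apply]; simp
lemma s1_val1 (v : V2) : s1 v 1 = v 0 := by rw [s1_apply]; simp
lemma s2_val0 (v : V2) : s2 v 0 = v 0 := by
  simp [s2, negAt_apply, (by decide : ((0 : Fin 2) = 1) ↔ False)]
lemma s2_val1 (v : V2) : s2 v 1 = -(v 1) := by simp [s2, negAt_apply]

lemma inV4_s1 (v : V2) (h : inV4 v) : inV4 (s1 v) :=
  ⟨by rw [s1_val0]; exact h.2, by rw [s1_val1]; exact h.1⟩

lemma inV4_s2 (v : V2) (h : inV4 v) : inV4 (s2 v) := by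
  obtain ⟨h0, h1⟩ := h
  refine ⟨by rw [s2_val0]; exact h0, ?_⟩
  rw [s2_val1]
  rcases h1 with h | h <;> rw [h]
  · exact Or.inr (by norm_num)
  · exact Or.inl (by norm_num)

lemma W0_orbit (x : Wt2) (hx : x ∈ W0) : ∀ v : V2, inV4 v → inV4 (x v) ∧ inV4 (x⁻¹ v) := by
  refine Subgroup.closure_induction ?_ ?_ ?_ ?_ hx
  · intro y hy v hv
    simp only [Set.mem_insert_iff, Set.mem_singleton_iff] at hy
    rcases hy with h | h <;> subst h
    · exact ⟨inV4_s1 v hv, by rw [s1_inv]; exact inV4_s1 v hv⟩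
    · exact ⟨inV4_s2 v hv, by rw [s2_inv]; exact inV4_s2 v hv⟩
  · intro v hv
    refine ⟨?_, ?_⟩ <;> simpa using hv
  · intro x y _ _ hxp hyp v hv
    constructor
    · rw [Equiv.Perm.mul_apply]
      exact (hxp _ ((hyp v hv).1)).1
    · rw [mul_inv_rev, Equiv.Perm.mul_apply]
      exact (hyp _ ((hxp v hv).2)).2
  · intro x _ hxp v hv
    refine ⟨(hxp v hv).2, ?_⟩
    rw [inv_inv]
    exact (hxp v hv).1

lemma transl_eq_phi (v : V2) (a b : ℤ) (h0 : v 0 = (a : ℚ) / 2) (h1 : v 1 = (b : ℚ) / 2) :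
    transl v = phi ⟨a, b, false, false, false⟩ := by
  apply Equiv.ext; intro w
  rw [phi_apply]
  funext i
  fin_cases i <;>
    simp [transl_apply, MM.actM, MM.tq, MM.eps, MM.idxF, MM.sgq, Pi.add_apply, h0, h1,
      (by decide : ((1 : Fin 2) = 0) ↔ False)]

def mvList : List MM := [⟨1, 1, false, false, false⟩, ⟨1, -1, false, false, false⟩,
  ⟨-1, 1, false, false, false⟩, ⟨-1, -1, false, false, false⟩]

lemma mv_witness : ∀ mv ∈ mvList, ∃ x ∈ W0, transl (x (fun _ => 1/2 : V2)) = phi mv := by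
  have hs1 : s1 ∈ W0 := Subgroup.subset_closure (Set.mem_insert _ _)
  have hs2 : s2 ∈ W0 := Subgroup.subset_closure (Set.mem_insert_of_mem _ rfl)
  intro mv hmv
  simp only [mvList, List.mem_cons, List.not_mem_nil, or_false] at hmv
  rcases hmv with h | h | h | h <;> subst h
  · exact ⟨1, one_mem _, transl_eq_phi _ 1 1 (by norm_num) (by norm_num)⟩
  · refine ⟨s2, hs2, transl_eq_phi _ 1 (-1) ?_ ?_⟩ <;>
      simp [s2, negAt_apply, (by decide : ((0 : Fin 2) = 1) ↔ False)] <;> norm_num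
  · refine ⟨s1 * s2, mul_mem hs1 hs2, transl_eq_phi _ (-1) 1 ?_ ?_⟩ <;>
      rw [Equiv.Perm.mul_apply] <;>
      simp [s1_apply, s2, negAt_apply, (by decide : ((0 : Fin 2) = 1) ↔ False)] <;> norm_num
  · refine ⟨s2 * (s1 * s2), mul_mem hs2 (mul_mem hs1 hs2), transl_eq_phi _ (-1) (-1) ?_ ?_⟩ <;>
      rw [Equiv.Perm.mul_apply, Equiv.Perm.mul_apply] <;>
      simp [s1_apply, s2, negAt_apply, (by decide : ((0 : Fin 2) = 1) ↔ False)] <;> norm_num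

def admList : List MM :=
  [⟨-1, -1, false, false, false⟩, ⟨-1, 1, false, false, false⟩, ⟨-1, 1, false, true, false⟩,
   ⟨1, -1, false, false, false⟩, ⟨1, -1, false, false, true⟩, ⟨1, -1, true, false, false⟩,
   ⟨1, -1, true, false, true⟩, ⟨1, 1, false, false, false⟩, ⟨1, 1, false, true, false⟩,
   ⟨1, 1, false, true, true⟩, ⟨1, 1, true, false, false⟩, ⟨1, 1, true, true, false⟩,
   ⟨1, 1, true, true, true⟩]

lemma Adm_iff (w : Wt2) : w ∈ Adm (fun _ => 1/2) ↔ ∃ n ∈ admList, w = phi n := by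
  constructor
  · rintro ⟨x, hxW0, hble⟩
    have h4 := (W0_orbit x hxW0 (fun _ => 1/2) ⟨Or.inl rfl, Or.inl rfl⟩).1
    obtain ⟨mv, hmv, htr⟩ : ∃ mv ∈ mvList, transl (x (fun _ => 1/2 : V2)) = phi mv := by
      obtain ⟨h0 | h0, h1 | h1⟩ := h4
      · exact ⟨_, by simp [mvList], transl_eq_phi _ 1 1 (by rw [h0]; norm_num) (by rw [h1]; norm_num)⟩
      · exact ⟨_, by simp [mvList], transl_eq_phi _ 1 (-1) (by rw [h0]; norm_num) (by rw [h1]; norm_num)⟩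
      · exact ⟨_, by simp [mvList], transl_eq_phi _ (-1) 1 (by rw [h0]; norm_num) (by rw [h1]; norm_num)⟩
      · exact ⟨_, by simp [mvList], transl_eq_phi _ (-1) (-1) (by rw [h0]; norm_num) (by rw [h1]; norm_num)⟩
    rw [htr, ble_iff] at hble
    obtain ⟨o, ho, n, rfl, hbw⟩ := hble
    rcases ho with ho | ho <;> subst ho
    · exfalso
      obtain ⟨lm, hred, -⟩ := hbw
      have hev := prod_even lm hred.1
      rw [hred.2.1] at hev
      simp only [mvList, List.mem_cons, List.not_mem_nil, or_false] at hmv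
      rcases hmv with h | h | h | h <;> subst h <;> revert hev <;> decide
    · obtain ⟨lm, hred, l', hsub, hprod⟩ := hbw
      have hlen : lm.length = 3 := by
        have h6 : MM.ell2 (mv * mtau⁻¹) = 6 := by
          simp only [mvList, List.mem_cons, List.not_mem_nil, or_false] at hmv
          rcases hmv with h | h | h | h <;> subst h <;> decide
        have := hred.2.2
        rw [h6] at this
        omega
      have hmem : lm ∈ allWords 3 := hlen ▸ mem_allWords lm hred.1
      have crunch1 : ∀ mv ∈ mvList, ∀ lm ∈ allWords 3, lm.prod = mv * mtau⁻¹ →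
          ∀ l' ∈ lm.sublists, l'.prod * mtau ∈ admList := by decide
      refine ⟨n * mtau, ?_, rfl⟩
      rw [← hprod]
      exact crunch1 mv hmv lm hmem hred.2.1 l' (List.mem_sublists.mpr hsub)
  · rintro ⟨n, hn, rfl⟩
    have crunch2 : ∀ n ∈ admList, ∃ mv ∈ mvList, ∃ lm ∈ allWords 3,
        IsRedM (mv * mtau⁻¹) lm ∧ ∃ l' ∈ lm.sublists, l'.prod = n * mtau⁻¹ := by decide
    obtain ⟨mv, hmv, lm, -, hred, l', hsub, hprod⟩ := crunch2 n hn
    obtain ⟨x, hxW0, htr⟩ := mv_witness mv hmv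
    refine ⟨x, hxW0, ?_⟩
    rw [htr, ble_iff]
    refine ⟨mtau, Or.inr rfl, n * mtau⁻¹, by rw [inv_mul_cancel_right], ?_⟩
    exact ⟨lm, hred, l', List.mem_sublists.mp hsub, hprod⟩

def eoList : List MM := [⟨1, 1, true, true, true⟩, ⟨1, 1, true, true, false⟩,
  ⟨-1, 1, false, true, false⟩, ⟨1, 1, true, false, false⟩, ⟨-1, 1, false, false, false⟩]

lemma EO_iff (w : Wt2) : w ∈ EO {s0, s2} (fun _ => 1/2) ↔ ∃ m ∈ eoList, w = phi m := by
  constructor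
  · rintro ⟨⟨x, hx, y, hy, a, ha, rfl⟩, hmin⟩
    obtain ⟨p, hp, rfl⟩ := WJ_sub x hx
    obtain ⟨q, hq, rfl⟩ := WJ_sub y hy
    obtain ⟨n, hn, rfl⟩ := (Adm_iff a).mp ha
    have heq : phi p * phi n * phi q = phi (p * n * q) := by rw [phi_mul, phi_mul]
    rw [heq] at hmin ⊢
    have hminM := (minJ_iff _).mp hmin
    have crunch3 : ∀ p ∈ KJML, ∀ n ∈ admList, ∀ q ∈ KJML,
        minJM (p * n * q) → p * n * q ∈ eoList := by decide
    exact ⟨p * n * q, crunch3 p hp n hn q hq hminM, rfl⟩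
  · rintro ⟨m, hm, rfl⟩
    have crunch4 : ∀ m ∈ eoList, m ∈ admList := by decide
    have crunch5 : ∀ m ∈ eoList, minJM m := by decide
    refine ⟨⟨1, one_mem _, 1, one_mem _, phi m, (Adm_iff _).mpr ⟨m, crunch4 m hm, rfl⟩, by group⟩,
      (minJ_iff m).mpr (crunch5 m hm)⟩
lemma mtau_sq : mtau * mtau = (1 : MM) := by decide
lemma mtau_inv : mtau⁻¹ = mtau := by decide

lemma tau2_sq : tau2 * tau2 = 1 := by
  rw [tau2_eq, ← phi_mul, mtau_sq, phi_one]

lemma delta_tau : deltaW (MulAut.conj tau2) tau2 = 1 := by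
  rw [deltaW, ← map_mul, tau2_sq, map_one]

lemma suppsig_eq (m : MM) (ha : ¬ isEv m) (kk : ℕ) (hk : MM.ell2 (m * mtau) = 2 * kk)
    (L : List MM)
    (hsub : ∀ lm ∈ allWords kk, IsRedM (m * mtau) lm → ∀ p ∈ lm, p ∈ L)
    (hsup : ∀ p ∈ L, ∃ lm ∈ allWords kk, IsRedM (m * mtau) lm ∧ p ∈ lm) :
    suppsig (MulAut.conj tau2) (phi m) = {s | ∃ p ∈ L, s = phi p} := by
  ext s
  constructor
  · rintro ⟨u, om, l, hom, heq, hred, s0', hs0l, k, hks⟩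
    obtain ⟨n, lm, rfl, rfl, hredM⟩ := IsRed_toM _ _ hred
    rw [Om_eq] at hom
    simp only [Set.mem_insert_iff, Set.mem_singleton_iff] at hom
    obtain ⟨o, ho, rfl⟩ : ∃ o, (o = 1 ∨ o = mtau) ∧ om = phi o := by
      rcases hom with h | h
      · exact ⟨1, Or.inl rfl, h⟩
      · exact ⟨mtau, Or.inr rfl, h⟩
    have hmn : m = n * o := phi_injective (by rw [phi_mul, ← heq])
    rcases ho with ho | ho <;> subst ho
    · exfalso
      apply ha
      have hev := prod_even lm hredM.1
      rw [hredM.2.1] at hev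
      rw [hmn, mul_one]
      exact hev
    · have hn : n = m * mtau := by
        rw [hmn, mul_assoc, mtau_sq, mul_one]
      subst hn
      have hs : s = s0' := by
        rw [hks, ← tau2_eq, delta_tau, one_zpow]
        rfl
      subst hs
      obtain ⟨p, hplm, rfl⟩ := List.mem_map.mp hs0l
      have hlen : lm.length = kk := by
        have := hredM.2.2
        rw [hk] at this
        omega
      exact ⟨p, hsub lm (hlen ▸ mem_allWords lm hredM.1) hredM p hplm, rfl⟩
  · rintro ⟨p, hpL, rfl⟩
    obtain ⟨lm, hlmW, hred, hplm⟩ := hsup p hpL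
    refine ⟨phi (m * mtau), tau2, lm.map phi, Set.mem_insert_of_mem _ rfl, ?_,
      IsRed_ofM _ _ hred, phi p, List.mem_map.mpr ⟨p, hplm, rfl⟩, 0, ?_⟩
    · rw [tau2_eq, ← phi_mul, mul_assoc, mtau_sq, mul_one]
    · rw [zpow_zero]
      rfl

lemma setOfL (L : List MM) : {s | ∃ p ∈ L, s = phi p} = phi '' {p | p ∈ L} := by
  ext s
  simp only [Set.mem_setOf_eq, Set.mem_image]
  constructor
  · rintro ⟨p, hp, rfl⟩; exact ⟨p, hp, rfl⟩
  · rintro ⟨p, hp, rfl⟩; exact ⟨p, hp, rfl⟩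

lemma ne_St (L : List MM) (q : MM) (hq : q ∈ StML) (hqL : q ∉ L) :
    {s | ∃ p ∈ L, s = phi p} ≠ St := by
  intro h
  have hqSt : phi q ∈ St := by
    rw [St_eq]
    simp only [StML, List.mem_cons, List.not_mem_nil, or_false] at hq
    rcases hq with h' | h' | h' <;> subst h' <;> simp
  rw [← h] at hqSt
  obtain ⟨p, hpL, heq⟩ := hqSt
  exact hqL (phi_injective heq ▸ hpL)

lemma supp_all : {s | ∃ p ∈ StML, s = phi p} = St := by
  ext s
  rw [St_eq]
  simp only [Set.mem_setOf_eq, StML, List.mem_cons, List.not_mem_nil, or_false,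
    Set.mem_insert_iff, Set.mem_singleton_iff]
  constructor
  · rintro ⟨p, (h | h | h), rfl⟩ <;> subst h <;> tauto
  · rintro (h | h | h) <;> exact ⟨_, by tauto, h⟩

lemma orbCount_one (A : Set Wt2) : orbCount 1 A = A.ncard := by
  have h : {O : Set Wt2 | ∃ s ∈ A, O = {t | ∃ m : ℤ, ((1 : MulAut Wt2) ^ m) s = t}} =
      (fun s => ({s} : Set Wt2)) '' A := by
    ext O
    simp only [Set.mem_setOf_eq, Set.mem_image]
    constructor
    · rintro ⟨s, hs, rfl⟩
      refine ⟨s, hs, ?_⟩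
      ext t
      simp [one_zpow, eq_comm]
    · rintro ⟨s, hs, rfl⟩
      refine ⟨s, hs, ?_⟩
      ext t
      simp [one_zpow, eq_comm]
  rw [orbCount, h, Set.ncard_image_of_injective _ Set.singleton_injective]

def mE2 : MM := ⟨1, 1, true, true, false⟩
def mE3 : MM := ⟨-1, 1, false, true, false⟩
def mE4 : MM := ⟨1, 1, true, false, false⟩
def mE5 : MM := ⟨-1, 1, false, false, false⟩

lemma hsupp1 : suppsig (MulAut.conj tau2) (phi mtau) = {s | ∃ p ∈ ([] : List MM), s = phi p} :=
  suppsig_eq mtau (by decide) 0 (by decide) [] (by decide) (by decide)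

lemma hsupp2 : suppsig (MulAut.conj tau2) (phi mE2) = {s | ∃ p ∈ [ms1], s = phi p} :=
  suppsig_eq mE2 (by decide) 1 (by decide) [ms1] (by decide) (by decide)

lemma hsupp3 : suppsig (MulAut.conj tau2) (phi mE3) = {s | ∃ p ∈ [ms1, ms2], s = phi p} :=
  suppsig_eq mE3 (by decide) 2 (by decide) [ms1, ms2] (by decide) (by decide)

lemma hsupp4 : suppsig (MulAut.conj tau2) (phi mE4) = {s | ∃ p ∈ [ms1, ms0], s = phi p} :=
  suppsig_eq mE4 (by decide) 2 (by decide) [ms1, ms0] (by decide) (by decide)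

lemma hsupp5 : suppsig (MulAut.conj tau2) (phi mE5) = St := by
  rw [suppsig_eq mE5 (by decide) 3 (by decide) StML (by decide) (by decide)]
  exact supp_all

lemma ncard_setOf (L : List MM) : {s | ∃ p ∈ L, s = phi p}.ncard = {p | p ∈ L}.ncard := by
  rw [setOfL, Set.ncard_image_of_injective _ phi_injective]

lemma cox_of (m : MM) (L : List MM) (kk : ℕ)
    (hss : suppsig (MulAut.conj tau2) (phi m) = {s | ∃ p ∈ L, s = phi p})
    (hn : ({p | p ∈ L} : Set MM).ncard = kk) (he : MM.ell2 (m * mtau) = 2 * kk) :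
    IsCox (MulAut.conj tau2) (phi m) := by
  refine ⟨phi (m * mtau), tau2, Set.mem_insert_of_mem _ rfl, ?_, ?_⟩
  · rw [tau2_eq, ← phi_mul, mul_assoc, mtau_sq, mul_one]
  · rw [delta_tau, orbCount_one, hss, ncard_setOf, hn, ell_phi, he]
    push_cast; ring

lemma ncard_nil : ({p | p ∈ ([] : List MM)} : Set MM).ncard = 0 := by simp

lemma ncard_one : ({p | p ∈ [ms1]} : Set MM).ncard = 1 := by
  have : ({p | p ∈ [ms1]} : Set MM) = {ms1} := by ext p; simp
  rw [this, Set.ncard_singleton]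

lemma ncard_two12 : ({p | p ∈ [ms1, ms2]} : Set MM).ncard = 2 := by
  have : ({p | p ∈ [ms1, ms2]} : Set MM) = {ms1, ms2} := by ext p; simp
  rw [this, Set.ncard_pair (by decide)]

lemma ncard_two10 : ({p | p ∈ [ms1, ms0]} : Set MM).ncard = 2 := by
  have : ({p | p ∈ [ms1, ms0]} : Set MM) = {ms1, ms0} := by ext p; simp
  rw [this, Set.ncard_pair (by decide)]

lemma cox1 : IsCox (MulAut.conj tau2) (phi mtau) :=
  cox_of mtau [] 0 hsupp1 ncard_nil (by decide)

lemma cox2 : IsCox (MulAut.conj tau2) (phi mE2) :=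
  cox_of mE2 [ms1] 1 hsupp2 ncard_one (by decide)

lemma cox3 : IsCox (MulAut.conj tau2) (phi mE3) :=
  cox_of mE3 [ms1, ms2] 2 hsupp3 ncard_two12 (by decide)

lemma cox4 : IsCox (MulAut.conj tau2) (phi mE4) :=
  cox_of mE4 [ms1, ms0] 2 hsupp4 ncard_two10 (by decide)
lemma w5_eq : s1 * s2 * s0 * tau2 = phi mE5 := by
  rw [s1_eq, s2_eq, s0_eq, tau2_eq, ← phi_mul, ← phi_mul, ← phi_mul]
  exact congrArg phi (by decide)

lemma sigma_w5 : (MulAut.conj tau2) (phi mE5) = phi mE5 := by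
  rw [MulAut.conj_apply, tau2_eq, ← phi_inv, ← phi_mul, ← phi_mul]
  exact congrArg phi (by decide)

lemma sigmaPow_w5 (k : ℕ) : ((MulAut.conj tau2) ^ k) (phi mE5) = phi mE5 := by
  induction k with
  | zero => rfl
  | succ n ih => rw [pow_succ, MulAut.mul_apply, sigma_w5, ih]

lemma sigmaProd_w5 (k : ℕ) :
    sigmaProd (MulAut.conj tau2) (phi mE5) k = (phi mE5) ^ k := by
  rw [sigmaProd]
  have hf : ∀ j ∈ List.range k, ((MulAut.conj tau2) ^ j) (phi mE5) = phi mE5 :=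
    fun j _ => sigmaPow_w5 j
  rw [List.map_congr_left hf, List.map_const', List.length_range, List.prod_replicate]

lemma transl_mul (v w : V2) : transl v * transl w = transl (v + w) := by
  apply Equiv.ext; intro x
  simp only [Equiv.Perm.mul_apply, transl_apply]
  funext i
  simp [add_assoc]

lemma transl_zero : transl 0 = 1 := by
  apply Equiv.ext; intro x
  simp [transl_apply]

def vv : V2 := fun i => if i = 0 then -(1/2 : ℚ) else 1/2

lemma w5_transl : phi mE5 = transl vv :=
  (transl_eq_phi vv (-1) 1 (by norm_num [vv])
    (by norm_num [vv, (by decide : ((1 : Fin 2) = 0) ↔ False)])).symm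

lemma transl_pow (v : V2) (k : ℕ) : (transl v) ^ k = transl ((k : ℚ) • v) := by
  induction k with
  | zero => simp [transl_zero]
  | succ n ih =>
    rw [pow_succ, ih, transl_mul]
    congr 1
    funext i
    simp only [Pi.smul_apply, Pi.add_apply, smul_eq_mul]
    push_cast
    ring

lemma transl_inv (lam : V2) : (transl lam)⁻¹ = transl (-lam) := by
  apply inv_eq_of_mul_eq_one_left
  rw [transl_mul, neg_add_cancel, transl_zero]

lemma ell_transl (lam : V2) :
    ell (transl lam) = |lam 0 - lam 1| + |lam 0 + lam 1| + |2 * lam 0| + |2 * lam 1| := by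
  have hlin : ∀ α : V2, linp (transl lam)⁻¹ α = α := by
    intro α
    rw [transl_inv]
    funext i
    simp [linp, transl_apply]
  have hdot : ∀ α : V2, dotp (transl lam 0) α = lam 0 * α 0 + lam 1 * α 1 := by
    intro α
    simp [dotp, Fin.sum_univ_two, transl_apply]
  have hterm : ∀ α : V2, α ∈ PhiC2 → lterm (transl lam) α = |lam 0 * α 0 + lam 1 * α 1| := by
    intro α hα
    rw [lterm, if_pos (by rw [hlin]; exact hα), hdot]
  have m1 : (eV 0 - eV 1) ∈ PhiC2 := Set.mem_insert _ _
  have m2 : (eV 0 + eV 1) ∈ PhiC2 := Set.mem_insert_of_mem _ (Set.mem_insert _ _)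
  have m3 : (eV 0 + eV 0) ∈ PhiC2 :=
    Set.mem_insert_of_mem _ (Set.mem_insert_of_mem _ (Set.mem_insert _ _))
  have m4 : (eV 1 + eV 1) ∈ PhiC2 :=
    Set.mem_insert_of_mem _ (Set.mem_insert_of_mem _ (Set.mem_insert_of_mem _ rfl))
  have fe : ((1 : Fin 2) = 0) ↔ False := by decide
  have fe' : ((0 : Fin 2) = 1) ↔ False := by decide
  have d1 : lam 0 * (eV 0 - eV 1) 0 + lam 1 * (eV 0 - eV 1) 1 = lam 0 - lam 1 := by
    simp [Pi.sub_apply, eV_apply, fe, fe']; ring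
  have d2 : lam 0 * (eV 0 + eV 1) 0 + lam 1 * (eV 0 + eV 1) 1 = lam 0 + lam 1 := by
    simp [Pi.add_apply, eV_apply, fe, fe']
  have d3 : lam 0 * (eV 0 + eV 0) 0 + lam 1 * (eV 0 + eV 0) 1 = 2 * lam 0 := by
    simp [Pi.add_apply, eV_apply, fe, fe']; ring
  have d4 : lam 0 * (eV 1 + eV 1) 0 + lam 1 * (eV 1 + eV 1) 1 = 2 * lam 1 := by
    simp [Pi.add_apply, eV_apply, fe, fe']; ring
  rw [ell, hterm _ m1, hterm _ m2, hterm _ m3, hterm _ m4, d1, d2, d3, d4]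

lemma straight5 : IsStraight (MulAut.conj tau2) (s1 * s2 * s0 * tau2) := by
  intro k hk
  rw [w5_eq, sigmaProd_w5, w5_transl, transl_pow, ell_transl, ell_transl]
  have e0 : ((k : ℚ) • vv) 0 = -((k : ℚ) / 2) := by simp [vv]; ring
  have e1 : ((k : ℚ) • vv) 1 = (k : ℚ) / 2 := by
    simp [vv, (by decide : ((1 : Fin 2) = 0) ↔ False)]; ring
  have hq : (0 : ℚ) ≤ (k : ℚ) := by positivity
  rw [e0, e1,
    show (-((k:ℚ)/2) - (k:ℚ)/2 : ℚ) = -(k:ℚ) by ring,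
    show (-((k:ℚ)/2) + (k:ℚ)/2 : ℚ) = 0 by ring,
    show (2 * -((k:ℚ)/2) : ℚ) = -(k:ℚ) by ring,
    show (2 * ((k:ℚ)/2) : ℚ) = (k:ℚ) by ring,
    abs_neg, abs_of_nonneg hq, abs_zero]
  norm_num [vv]
  ring

lemma newton5 : IsNewton (MulAut.conj tau2) (s1 * s2 * s0 * tau2) (fun _ => 1/2) := by
  have hs1 : s1 ∈ W0 := Subgroup.subset_closure (Set.mem_insert _ _)
  have hs2 : s2 ∈ W0 := Subgroup.subset_closure (Set.mem_insert_of_mem _ rfl)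
  refine ⟨2, (fun i => if i = 0 then -1 else 1 : V2), one_le_two, ?_, ?_,
    ⟨s2 * s1, mul_mem hs2 hs1, ?_⟩, by norm_num, by norm_num⟩
  · rw [← map_pow, sq, tau2_sq, map_one]
  · rw [w5_eq, sigmaProd_w5, w5_transl, transl_pow]
    congr 1
    funext i
    fin_cases i <;>
      simp [vv, (by decide : ((1 : Fin 2) = 0) ↔ False)] <;> norm_num
  · funext i
    fin_cases i <;>
      rw [Equiv.Perm.mul_apply] <;>
      simp [s1_val0, s1_val1, s2_val0, s2_val1,
        (by decide : ((1 : Fin 2) = 0) ↔ False)] <;> norm_num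
lemma heq2 : s1 * tau2 = phi mE2 := by
  rw [s1_eq, tau2_eq, ← phi_mul]
  exact congrArg phi (by decide)

lemma heq3 : s1 * s2 * tau2 = phi mE3 := by
  rw [s1_eq, s2_eq, tau2_eq, ← phi_mul, ← phi_mul]
  exact congrArg phi (by decide)

lemma heq4 : s1 * s0 * tau2 = phi mE4 := by
  rw [s1_eq, s0_eq, tau2_eq, ← phi_mul, ← phi_mul]
  exact congrArg phi (by decide)

lemma hEOmem : ∀ m ∈ eoList, phi m ∈ EO {s0, s2} (fun _ => 1/2) :=
  fun m hm => (EO_iff _).mpr ⟨m, hm, rfl⟩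

lemma hc1 : phi mtau ∈ EOcox (MulAut.conj tau2) {s0, s2} (fun _ => 1/2) :=
  ⟨hEOmem mtau (by decide), by rw [hsupp1]; exact ne_St [] ms0 (by decide) (by decide), cox1⟩

lemma hc2 : phi mE2 ∈ EOcox (MulAut.conj tau2) {s0, s2} (fun _ => 1/2) :=
  ⟨hEOmem mE2 (by decide), by rw [hsupp2]; exact ne_St [ms1] ms0 (by decide) (by decide), cox2⟩

lemma hc3 : phi mE3 ∈ EOcox (MulAut.conj tau2) {s0, s2} (fun _ => 1/2) :=
  ⟨hEOmem mE3 (by decide), by rw [hsupp3]; exact ne_St [ms1, ms2] ms0 (by decide) (by decide),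
    cox3⟩

lemma hc4 : phi mE4 ∈ EOcox (MulAut.conj tau2) {s0, s2} (fun _ => 1/2) :=
  ⟨hEOmem mE4 (by decide), by rw [hsupp4]; exact ne_St [ms1, ms0] ms2 (by decide) (by decide),
    cox4⟩

lemma hnc5 : phi mE5 ∉ EOcox (MulAut.conj tau2) {s0, s2} (fun _ => 1/2) :=
  fun h => h.2.1 hsupp5

/-- (C̃₂, ω₂^∨, S̃ ∖ {s₁}, Ad(τ₂)). -/
theorem statement15 :
    EOcox (MulAut.conj tau2) {s0, s2} (fun _ => 1/2) =
      {tau2, s1 * tau2, s1 * s2 * tau2, s1 * s0 * tau2} ∧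
    EO {s0, s2} (fun _ => 1/2) \ EOcox (MulAut.conj tau2) {s0, s2} (fun _ => 1/2) =
      {s1 * s2 * s0 * tau2} ∧
    IsStraight (MulAut.conj tau2) (s1 * s2 * s0 * tau2) ∧
    IsNewton (MulAut.conj tau2) (s1 * s2 * s0 * tau2) (fun _ => 1/2) := by
  refine ⟨?_, ?_, straight5, newton5⟩
  · ext w
    simp only [Set.mem_insert_iff, Set.mem_singleton_iff]
    constructor
    · rintro ⟨hEOw, hne, hcox⟩
      obtain ⟨m, hm, rfl⟩ := (EO_iff w).mp hEOw
      simp only [eoList, List.mem_cons, List.not_mem_nil, or_false] at hm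
      rcases hm with h | h | h | h | h <;> subst h
      · exact Or.inl tau2_eq.symm
      · exact Or.inr (Or.inl heq2.symm)
      · exact Or.inr (Or.inr (Or.inl heq3.symm))
      · exact Or.inr (Or.inr (Or.inr heq4.symm))
      · exact absurd hsupp5 hne
    · rintro (rfl | rfl | rfl | rfl)
      · have h := hc1; rwa [← tau2_eq] at h
      · have h := hc2; rwa [← heq2] at h
      · have h := hc3; rwa [← heq3] at h
      · have h := hc4; rwa [← heq4] at h
  · ext w
    simp only [Set.mem_diff, Set.mem_singleton_iff]
    constructor
    · rintro ⟨hEOw, hnotcox⟩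
      obtain ⟨m, hm, rfl⟩ := (EO_iff w).mp hEOw
      simp only [eoList, List.mem_cons, List.not_mem_nil, or_false] at hm
      rcases hm with h | h | h | h | h <;> subst h
      · exact absurd hc1 hnotcox
      · exact absurd hc2 hnotcox
      · exact absurd hc3 hnotcox
      · exact absurd hc4 hnotcox
      · exact w5_eq.symm
    · rintro rfl
      have h : phi mE5 ∈ EO {s0, s2} (fun _ => 1/2) ∧
          phi mE5 ∉ EOcox (MulAut.conj tau2) {s0, s2} (fun _ => 1/2) :=
        ⟨hEOmem mE5 (by decide), hnc5⟩
      rwa [← w5_eq] at h
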